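/- Let A be a real m×n matrix, x, p ∈ ℝⁿ with ⟪x - p, p⟫ = 0, and b = A·x. Let W be the subspace of ℝⁿ spanned by p together with the rows of A, and let q be the orthogonal projection of x onto W. Then ‖q‖ = ‖p‖ if and only if A·p = b. -/

import Mathlib

open scoped RealInnerProductSpace
open Matrix

/-- if `⟪x - p, p⟫ = 0` and `q` is the orthogonal projection of
`x` onto `W = span{p} ⊔ ran(Aᵀ)`, then `‖q‖ = ‖p‖` if and only if `A p = b`. -/
theorem ap_norm_stagnates_iff {m n : ℕ}
    (A : Matrix (Fin m) (Fin n) ℝ)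
    (x p : EuclideanSpace ℝ (Fin n)) (horth : ⟪x - p, p⟫ = 0)
    (b : EuclideanSpace ℝ (Fin m)) (hb : b = A.mulVec x)
    (W : Submodule ℝ (EuclideanSpace ℝ (Fin n)))
    (hW : W = Submodule.span ℝ {p} ⊔
        Submodule.span ℝ (Set.range fun i : Fin m => (WithLp.toLp 2 (A i) : EuclideanSpace ℝ (Fin n))))
    (q : EuclideanSpace ℝ (Fin n))
    (hqmem : q ∈ W) (hqorth : ∀ w ∈ W, ⟪x - q, w⟫ = 0) :
    ‖q‖ = ‖p‖ ↔ (WithLp.toLp 2 (A.mulVec p) : EuclideanSpace ℝ (Fin m)) = b := by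
  have hpW : p ∈ W := by
    rw [hW]; exact Submodule.mem_sup_left (Submodule.mem_span_singleton_self p)
  have hrowW : ∀ i : Fin m, (WithLp.toLp 2 (A i) : EuclideanSpace ℝ (Fin n)) ∈ W := fun i => by
    rw [hW]; exact Submodule.mem_sup_right (Submodule.subset_span ⟨i, rfl⟩)
  -- inner of row with a vector is mulVec
  have hinner_row : ∀ (v : EuclideanSpace ℝ (Fin n)) (i : Fin m),
      ⟪v, (WithLp.toLp 2 (A i) : EuclideanSpace ℝ (Fin n))⟫ = A.mulVec v i := by
    intro v i
    simp [PiLp.inner_apply, Matrix.mulVec, dotProduct, mul_comm]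
  -- ⟪q - p, p⟫ = 0
  have hqp : ⟪q - p, p⟫ = 0 := by
    have h := hqorth p hpW
    have heq : q - p = -(x - q) + (x - p) := by abel
    rw [heq, inner_add_left, inner_neg_left, h, horth]; ring
  -- ‖q‖ = ‖p‖ ↔ q = p
  have hnorm_iff : ‖q‖ = ‖p‖ ↔ q = p := by
    constructor
    · intro h
      have hsq : ‖q‖ ^ 2 = ‖q - p‖ ^ 2 + ‖p‖ ^ 2 := by
        have : q = (q - p) + p := by abel
        calc ‖q‖ ^ 2 = ‖(q - p) + p‖ ^ 2 := by rw [← this]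
          _ = ‖q - p‖ ^ 2 + 2 * ⟪q - p, p⟫ + ‖p‖ ^ 2 := norm_add_sq_real _ _
          _ = ‖q - p‖ ^ 2 + ‖p‖ ^ 2 := by rw [hqp]; ring
      have : ‖q - p‖ ^ 2 = 0 := by
        have := hsq
        rw [h] at this
        linarith
      have : ‖q - p‖ = 0 := by
        have h2 := sq_eq_zero_iff.mp this
        exact h2
      have := norm_eq_zero.mp this
      exact sub_eq_zero.mp this
    · intro h; rw [h]
  rw [hnorm_iff]
  constructor
  · intro h
    subst h
    ext i
    have h1 := hqorth (WithLp.toLp 2 (A i)) (hrowW i)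
    rw [hinner_row, WithLp.ofLp_sub, Matrix.mulVec_sub] at h1
    have h2 : (A *ᵥ x) i = (A *ᵥ q) i := by simpa [sub_eq_zero] using h1
    rw [hb]
    exact h2.symm
  · intro h
    -- x - p is orthogonal to W
    have hxp : ∀ w ∈ W, ⟪x - p, w⟫ = 0 := by
      intro w hw
      rw [hW] at hw
      obtain ⟨w1, hw1, w2, hw2, rfl⟩ := Submodule.mem_sup.mp hw
      obtain ⟨c, rfl⟩ := Submodule.mem_span_singleton.mp hw1
      clear hw hw1
      have h2 : ⟪x - p, w2⟫ = 0 := by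
        induction hw2 using Submodule.span_induction with
        | mem v hv =>
            obtain ⟨i, rfl⟩ := hv
            rw [hinner_row, WithLp.ofLp_sub, Matrix.mulVec_sub]
            have h' : A *ᵥ p.ofLp = b.ofLp := congrArg WithLp.ofLp h
            simp [h', hb]
        | zero => simp
        | add u v _ _ hu hv => rw [inner_add_right, hu, hv]; ring
        | smul c v _ hv => rw [inner_smul_right, hv]; ring
      rw [inner_add_right, inner_smul_right, horth, h2]; ring
    -- then q - p ⊥ W while q - p ∈ W
    have hmem : q - p ∈ W := Submodule.sub_mem W hqmem hpW
    have hz : ⟪q - p, q - p⟫ = 0 := by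
      have heq : q - p = (x - p) - (x - q) := by abel
      calc ⟪q - p, q - p⟫ = ⟪(x - p) - (x - q), q - p⟫ := by rw [← heq]
        _ = ⟪x - p, q - p⟫ - ⟪x - q, q - p⟫ := inner_sub_left _ _ _
        _ = 0 := by rw [hxp _ hmem, hqorth _ hmem]; ring
    exact sub_eq_zero.mp (inner_self_eq_zero.mp hz)
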